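/- Let a₁, …, a_n be points in a metric space and let MST denote a minimum spanning tree on these points with edge weights given by pairwise distances. Let St be any connected compact set containing all aᵢ. Then the total weight of MST is at most 2·H¹(St). -/

import Mathlib

open MeasureTheory Finset Metric

section Helpers

variable {V : Type*}

lemma reachable_sup_edge_cases {G : SimpleGraph V} {s t i j : V}
    (h : (G ⊔ SimpleGraph.edge s t).Reachable i j) :
    G.Reachable i j ∨ (G.Reachable i s ∧ G.Reachable t j) ∨
      (G.Reachable i t ∧ G.Reachable s j) := by
  obtain ⟨w⟩ := h
  induction w with
  | nil => exact Or.inl (SimpleGraph.Reachable.refl _)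
  | @cons x y z hxy p ih =>
    rcases (SimpleGraph.sup_adj _ _ _ _).mp hxy with hGxy | hExy
    · rcases ih with h1 | ⟨h1, h2⟩ | ⟨h1, h2⟩
      · exact Or.inl (hGxy.reachable.trans h1)
      · exact Or.inr (Or.inl ⟨hGxy.reachable.trans h1, h2⟩)
      · exact Or.inr (Or.inr ⟨hGxy.reachable.trans h1, h2⟩)
    · rw [SimpleGraph.edge_adj] at hExy
      rcases hExy.1 with ⟨rfl, rfl⟩ | ⟨rfl, rfl⟩
      · rcases ih with h1 | ⟨h1, h2⟩ | ⟨h1, h2⟩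
        · exact Or.inr (Or.inl ⟨SimpleGraph.Reachable.refl _, h1⟩)
        · exact Or.inl (h1.symm.trans h2)
        · exact Or.inl h2
      · rcases ih with h1 | ⟨h1, h2⟩ | ⟨h1, h2⟩
        · exact Or.inr (Or.inr ⟨SimpleGraph.Reachable.refl _, h1⟩)
        · exact Or.inl h2
        · exact Or.inr (Or.inr ⟨SimpleGraph.Reachable.refl _, h2⟩)

lemma isAcyclic_sup_edge {G : SimpleGraph V} {s t : V}
    (hG : G.IsAcyclic) (hst : ¬ G.Reachable s t) :
    (G ⊔ SimpleGraph.edge s t).IsAcyclic := by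
  have hne : s ≠ t := fun h => hst (h ▸ SimpleGraph.Reachable.refl s)
  have hedge : ∀ e, e ∈ (G ⊔ SimpleGraph.edge s t).edgeSet → e ≠ s(s, t) → e ∈ G.edgeSet := by
    intro e he hne'
    rw [SimpleGraph.edgeSet_sup] at he
    rcases he with h | h
    · exact h
    · rw [SimpleGraph.edge_edgeSet_of_ne hne] at h
      exact absurd h hne'
  intro v c hc
  by_cases hmem : s(s, t) ∈ c.edges
  · have hbr : (G ⊔ SimpleGraph.edge s t).IsBridge s(s, t) := by
      rw [SimpleGraph.isBridge_iff_forall_walk_mem_edges]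
      intro p
      by_contra hp
      refine hst ⟨p.transfer G ?_⟩
      intro e he
      exact hedge e (p.edges_subset_edgeSet he) (by rintro rfl; exact hp he)
    exact hbr.notMem_edges_of_isCycle hc hmem
  · have hed : ∀ e ∈ c.edges, e ∈ G.edgeSet := fun e he =>
      hedge e (c.edges_subset_edgeSet he) (by rintro rfl; exact hmem he)
    exact hG (c.transfer G hed) (hc.transfer hed)

end Helpers

lemma measure_annulus {X : Type*} [MetricSpace X] [MeasurableSpace X] [BorelSpace X]
    {S : Set X} (hS : IsPreconnected S)
    (f : X → ℝ) (hf : LipschitzWith 1 f)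
    {x q : X} (hx : x ∈ S) (hq : q ∈ S) {b₁ b₂ : ℝ}
    (hfx : f x ≤ b₁) (hfq : b₂ ≤ f q) :
    ENNReal.ofReal (b₂ - b₁) ≤ μH[1] (S ∩ f ⁻¹' Set.Ioo b₁ b₂) := by
  rcases le_or_gt b₂ b₁ with h | h
  · rw [ENNReal.ofReal_of_nonpos (by linarith)]
    exact zero_le
  · have hsub : Set.Ioo b₁ b₂ ⊆ f '' (S ∩ f ⁻¹' Set.Ioo b₁ b₂) := by
      intro y hy
      have : y ∈ Set.Icc (f x) (f q) := ⟨hfx.trans hy.1.le, hy.2.le.trans hfq⟩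
      obtain ⟨p, hp, hfp⟩ := hS.intermediate_value hx hq hf.continuous.continuousOn this
      exact ⟨p, ⟨hp, by rw [Set.mem_preimage, hfp]; exact hy⟩, hfp⟩
    calc ENNReal.ofReal (b₂ - b₁) = μH[1] (Set.Ioo b₁ b₂ : Set ℝ) := by
          rw [MeasureTheory.hausdorffMeasure_real, Real.volume_Ioo]
      _ ≤ μH[1] (f '' (S ∩ f ⁻¹' Set.Ioo b₁ b₂)) := measure_mono hsub
      _ ≤ μH[1] (S ∩ f ⁻¹' Set.Ioo b₁ b₂) := by
          simpa using hf.hausdorffMeasure_image_le (by norm_num : (0:ℝ) ≤ 1)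
            (S ∩ f ⁻¹' Set.Ioo b₁ b₂)

section Wsum

variable {X : Type*} [MetricSpace X] {n : ℕ} (a : Fin n → X)

open scoped Classical in
noncomputable def wsum (G' : SimpleGraph (Fin n)) : ℝ :=
  ∑ k, ∑ j, if G'.Adj k j then dist (a k) (a j) else 0

lemma wsum_eq (G' : SimpleGraph (Fin n)) [inst : DecidableRel G'.Adj] :
    wsum a G' = ∑ k, ∑ j, if G'.Adj k j then dist (a k) (a j) else 0 := by
  unfold wsum
  refine Finset.sum_congr rfl fun k _ => Finset.sum_congr rfl fun j _ => ?_
  exact ite_congr rfl (fun _ => rfl) fun _ => rfl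

lemma wsum_nonneg (G' : SimpleGraph (Fin n)) : 0 ≤ wsum a G' := by
  unfold wsum
  refine Finset.sum_nonneg fun k _ => Finset.sum_nonneg fun j _ => ?_
  split
  · exact dist_nonneg
  · exact le_refl 0

lemma wsum_bot : wsum a (⊥ : SimpleGraph (Fin n)) = 0 := by
  unfold wsum
  simp

lemma wsum_sup_edge (G' : SimpleGraph (Fin n)) {u v : Fin n}
    (hne : u ≠ v) (hadj : ¬ G'.Adj u v) :
    wsum a (G' ⊔ SimpleGraph.edge u v) = wsum a G' + 2 * dist (a u) (a v) := by
  classical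
  rw [wsum_eq, wsum_eq]
  have key : ∀ k j : Fin n,
      (if (G' ⊔ SimpleGraph.edge u v).Adj k j then dist (a k) (a j) else 0)
      = (if G'.Adj k j then dist (a k) (a j) else 0)
        + ((if k = u ∧ j = v then dist (a u) (a v) else 0)
          + (if k = v ∧ j = u then dist (a v) (a u) else 0)) := by
    intro k j
    by_cases hG : G'.Adj k j
    · have h1 : ¬(k = u ∧ j = v) := by rintro ⟨rfl, rfl⟩; exact hadj hG
      have h2 : ¬(k = v ∧ j = u) := by rintro ⟨rfl, rfl⟩; exact hadj hG.symm
      have : (G' ⊔ SimpleGraph.edge u v).Adj k j := Or.inl hG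
      simp [this, hG, h1, h2]
    · by_cases h1 : k = u ∧ j = v
      · have h2 : ¬(k = v ∧ j = u) := fun h2 => hne (h1.1.symm.trans h2.1)
        have hnew : (G' ⊔ SimpleGraph.edge u v).Adj k j :=
          Or.inr (by rw [SimpleGraph.edge_adj]
                     exact ⟨Or.inl h1, by rw [h1.1, h1.2]; exact hne⟩)
        rw [if_pos hnew, if_neg hG, if_pos h1, if_neg h2, h1.1, h1.2]; ring
      · by_cases h2 : k = v ∧ j = u
        · have hnew : (G' ⊔ SimpleGraph.edge u v).Adj k j :=
            Or.inr (by rw [SimpleGraph.edge_adj]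
                       exact ⟨Or.inr h2, by rw [h2.1, h2.2]; exact hne.symm⟩)
          rw [if_pos hnew, if_neg hG, if_neg h1, if_pos h2, h2.1, h2.2]; ring
        · have : ¬ (G' ⊔ SimpleGraph.edge u v).Adj k j := by
            rintro (h | h)
            · exact hG h
            · rw [SimpleGraph.edge_adj] at h
              rcases h.1 with h' | h'
              · exact h1 h'
              · exact h2 h'
          simp [this, hG, h1, h2]
  simp only [key, Finset.sum_add_distrib]
  congr 1
  have e1 : ∀ k : Fin n, (∑ j, if k = u ∧ j = v then dist (a u) (a v) else 0)
      = if k = u then dist (a u) (a v) else 0 := by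
    intro k
    by_cases hk : k = u <;> simp [hk]
  have e2 : ∀ k : Fin n, (∑ j, if k = v ∧ j = u then dist (a v) (a u) else 0)
      = if k = v then dist (a v) (a u) else 0 := by
    intro k
    by_cases hk : k = v <;> simp [hk]
  simp only [e1, e2, Finset.sum_add_distrib]
  simp [dist_comm]
  ring

end Wsum

section Main

variable {X : Type*} [MetricSpace X] [MeasurableSpace X] [BorelSpace X]
variable {n : ℕ} (a : Fin n → X) (S : Set X)

structure MSTInv (r : Fin n → Fin n) (ρ : Fin n → ℝ) (U : Fin n → Set X)
    (G' : SimpleGraph (Fin n)) : Prop where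
  acyclic : G'.IsAcyclic
  reach : ∀ i j, G'.Reachable i j ↔ r i = r j
  rho_nonneg : ∀ c, 0 ≤ ρ c
  rho_sep : ∀ i j, r i ≠ r j → 2 * ρ (r i) ≤ dist (a i) (a j)
  U_sub : ∀ c ∈ image r univ, U c ⊆ S ∩ {p | infDist p (a '' (r ⁻¹' {c})) < ρ c}
  U_meas : ∀ c, MeasurableSet (U c)
  U_disj : ∀ c ∈ image r univ, ∀ c' ∈ image r univ, c ≠ c' → Disjoint (U c) (U c')
  charge : ENNReal.ofReal (wsum a G' / 4 + ∑ c ∈ image r univ, ρ c)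
      ≤ ∑ c ∈ image r univ, μH[1] (U c)

lemma main_ind (hn : 0 < n) (hSconn : IsPreconnected S) (ha : ∀ i, a i ∈ S)
    (hSmeas : MeasurableSet S) :
    ∀ m : ℕ, ∀ r : Fin n → Fin n, ∀ ρ : Fin n → ℝ, ∀ U : Fin n → Set X,
      ∀ G' : SimpleGraph (Fin n), MSTInv a S r ρ U G' → (image r univ).card ≤ m →
      ∃ T : SimpleGraph (Fin n), T.IsTree ∧
        ENNReal.ofReal (wsum a T / 2) ≤ 2 * μH[1] S := by
  classical
  intro m
  induction m with
  | zero =>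
    intro r ρ U G' _ hcard
    exfalso
    have : (⟨0, hn⟩ : Fin n) ∈ (univ : Finset (Fin n)) := mem_univ _
    have hne : (image r univ).Nonempty := ⟨r ⟨0, hn⟩, mem_image_of_mem r this⟩
    have := card_pos.mpr hne
    omega
  | succ m ih =>
    intro r ρ U G' inv hcard
    by_cases hone : ∀ i j : Fin n, r i = r j
    · -- single cluster: G' is a tree
      refine ⟨G', ⟨?_, inv.acyclic⟩, ?_⟩
      · have : Nonempty (Fin n) := ⟨⟨0, hn⟩⟩
        exact SimpleGraph.Connected.mk fun i j => (inv.reach i j).mpr (hone i j)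
      · have hUS : ∀ c ∈ image r univ, U c ⊆ S := fun c hc =>
          (inv.U_sub c hc).trans Set.inter_subset_left
        have hsum : (∑ c ∈ image r univ, μH[1] (U c)) ≤ μH[1] S := by
          rw [← measure_biUnion_finset
            (fun c hc c' hc' hne => inv.U_disj c hc c' hc' hne)
            (fun c _ => inv.U_meas c)]
          exact measure_mono (Set.iUnion₂_subset hUS)
        have h1 : ENNReal.ofReal (wsum a G' / 4) ≤ μH[1] S := by
          refine le_trans (le_trans ?_ inv.charge) hsum
          apply ENNReal.ofReal_le_ofReal
          have : 0 ≤ ∑ c ∈ image r univ, ρ c :=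
            Finset.sum_nonneg fun c _ => inv.rho_nonneg c
          linarith
        have : ENNReal.ofReal (wsum a G' / 2)
            = 2 * ENNReal.ofReal (wsum a G' / 4) := by
          rw [← ENNReal.ofReal_ofNat, ← ENNReal.ofReal_mul (by norm_num)]
          congr 1; ring
        rw [this]
        exact mul_le_mul_right h1 2
    · -- merge step
      push_neg at hone
      obtain ⟨i0, j0, hij⟩ := hone
      have hpne : (univ.filter (fun p : Fin n × Fin n => r p.1 ≠ r p.2)).Nonempty :=
        ⟨(i0, j0), by simp [hij]⟩
      obtain ⟨p0, hp0mem, hp0min⟩ :=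
        Finset.exists_min_image _ (fun p : Fin n × Fin n => dist (a p.1) (a p.2)) hpne
      set u := p0.1 with hu
      set v := p0.2 with hv
      have huv : r u ≠ r v := (Finset.mem_filter.mp hp0mem).2
      set ℓ := dist (a u) (a v) with hℓdef
      have hℓmin : ∀ i j : Fin n, r i ≠ r j → ℓ ≤ dist (a i) (a j) := fun i j h =>
        hp0min (i, j) (by simp [h])
      have hℓ0 : 0 ≤ ℓ := dist_nonneg
      have hneuv : u ≠ v := fun h => huv (congrArg r h)
      set r₁ := r u with hr₁
      set r₂ := r v with hr₂
      have hr12 : r₁ ≠ r₂ := huv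
      -- cluster images
      set K₁ : Set X := a '' (r ⁻¹' {r₁}) with hK₁
      set K₂ : Set X := a '' (r ⁻¹' {r₂}) with hK₂
      have hK₁ne : K₁.Nonempty := ⟨a u, ⟨u, by simp [hr₁], rfl⟩⟩
      have hK₂ne : K₂.Nonempty := ⟨a v, ⟨v, by simp [hr₂], rfl⟩⟩
      have hKne : ∀ c ∈ image r univ, (a '' (r ⁻¹' {c})).Nonempty := by
        intro c hc
        obtain ⟨i, _, rfl⟩ := mem_image.mp hc
        exact ⟨a i, ⟨i, by simp, rfl⟩⟩
      have hρ1 : ρ r₁ ≤ ℓ / 2 := by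
        have := inv.rho_sep u v huv; linarith
      have hρ2 : ρ r₂ ≤ ℓ / 2 := by
        have := inv.rho_sep v u (Ne.symm huv)
        rw [dist_comm] at this; linarith
      -- separation principle
      have hsep : ∀ s t : Fin n, r s ≠ r t → ∀ p : X,
          dist p (a s) < ℓ / 2 → dist p (a t) < max (ρ (r t)) (ℓ / 2) → False := by
        intro s t hst p h1 h2
        have hd : ℓ ≤ dist (a s) (a t) := hℓmin s t hst
        have hρ : 2 * ρ (r t) ≤ dist (a t) (a s) := inv.rho_sep t s (Ne.symm hst)
        rw [dist_comm] at hρ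
        have hmax : max (ρ (r t)) (ℓ / 2) ≤ dist (a s) (a t) / 2 :=
          max_le (by linarith) (by linarith)
        have := dist_triangle (a s) p (a t)
        rw [dist_comm (a s) p] at this
        linarith
      -- definitions
      set r' : Fin n → Fin n := fun i => if r i = r₂ then r₁ else r i with hr'def
      set ρ' : Fin n → ℝ := fun c => if c = r₁ then ℓ / 2 else ρ c with hρ'def
      set f₁ : X → ℝ := fun p => infDist p K₁ with hf₁
      set f₂ : X → ℝ := fun p => infDist p K₂ with hf₂
      set A₁ : Set X := S ∩ f₁ ⁻¹' Set.Ioo (ρ r₁) (ℓ / 2) with hA₁def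
      set A₂ : Set X := S ∩ f₂ ⁻¹' Set.Ioo (ρ r₂) (ℓ / 2) with hA₂def
      set U' : Fin n → Set X :=
        fun c => if c = r₁ then U r₁ ∪ U r₂ ∪ A₁ ∪ A₂ else U c with hU'def
      set G'' := G' ⊔ SimpleGraph.edge u v with hG''def
      -- basic r' facts
      have hr'ne : ∀ i, r i ≠ r₂ → r' i = r i := by
        intro i h; simp only [hr'def, if_neg h]
      have hr'2 : ∀ i, r i = r₂ → r' i = r₁ := by
        intro i h; simp only [hr'def, if_pos h]
      have hr'1iff : ∀ i, r' i = r₁ ↔ (r i = r₁ ∨ r i = r₂) := by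
        intro i
        by_cases h : r i = r₂
        · simp [hr'2 i h, h]
        · rw [hr'ne i h]; simp [h]
      have hcong : ∀ i j, r i = r j → r' i = r' j := by
        intro i j h; simp only [hr'def, h]
      have hr'c : ∀ (i : Fin n) (c : Fin n), c ≠ r₁ → c ≠ r₂ → (r' i = c ↔ r i = c) := by
        intro i c h1 h2
        by_cases h : r i = r₂
        · rw [hr'2 i h]
          constructor
          · intro e; exact absurd e.symm h1
          · intro e; exact absurd (e.symm.trans h) h2
        · rw [hr'ne i h]
      have hpre : ∀ c : Fin n, c ≠ r₁ → c ≠ r₂ → r' ⁻¹' {c} = r ⁻¹' {c} := by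
        intro c h1 h2
        ext i
        simp only [Set.mem_preimage, Set.mem_singleton_iff]
        exact hr'c i c h1 h2
      have hpre1 : r' ⁻¹' {r₁} = r ⁻¹' {r₁} ∪ r ⁻¹' {r₂} := by
        ext i
        simp only [Set.mem_preimage, Set.mem_singleton_iff, Set.mem_union]
        exact hr'1iff i
      -- graph facts
      have hG''adj : G''.Adj u v := by
        refine (SimpleGraph.sup_adj _ _ _ _).mpr (Or.inr ?_)
        rw [SimpleGraph.edge_adj]
        exact ⟨Or.inl ⟨rfl, rfl⟩, hneuv⟩
      have hnadj : ¬ G'.Adj u v := fun h => huv ((inv.reach u v).mp h.reachable)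
      have hnreach : ¬ G'.Reachable u v := fun h => huv ((inv.reach u v).mp h)
      -- image of r'
      have himage' : image r' univ = (image r univ).erase r₂ := by
        ext c
        simp only [mem_image, mem_univ, true_and, mem_erase]
        constructor
        · rintro ⟨i, rfl⟩
          by_cases h : r i = r₂
          · rw [hr'2 i h]
            exact ⟨hr12, u, rfl⟩
          · rw [hr'ne i h]
            exact ⟨h, i, rfl⟩
        · rintro ⟨hc2, i, rfl⟩
          exact ⟨i, hr'ne i hc2⟩
      have hmem₂B : r₂ ∈ image r univ := mem_image_of_mem r (mem_univ v)
      have hmem₁B : r₁ ∈ image r univ := mem_image_of_mem r (mem_univ u)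
      have hmem₁B' : r₁ ∈ (image r univ).erase r₂ := mem_erase.mpr ⟨hr12, hmem₁B⟩
      have hcard' : (image r' univ).card ≤ m := by
        rw [himage', card_erase_of_mem hmem₂B]
        have := card_pos.mpr ⟨r₂, hmem₂B⟩
        omega
      -- measurability
      have hA₁meas : MeasurableSet A₁ :=
        hSmeas.inter ((continuous_infDist_pt K₁).measurable measurableSet_Ioo)
      have hA₂meas : MeasurableSet A₂ :=
        hSmeas.inter ((continuous_infDist_pt K₂).measurable measurableSet_Ioo)
      -- disjointness helpers
      have hdisjA₁U : ∀ c ∈ image r univ, c ≠ r₁ → Disjoint A₁ (U c) := by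
        intro c hc hc1
        rw [Set.disjoint_left]
        intro p hpA hpU
        obtain ⟨y, ⟨s, hs, rfl⟩, hys⟩ :=
          (infDist_lt_iff hK₁ne).mp hpA.2.2
        obtain ⟨z, ⟨t, ht, rfl⟩, hzt⟩ :=
          (infDist_lt_iff (hKne c hc)).mp ((inv.U_sub c hc) hpU).2
        simp only [Set.mem_preimage, Set.mem_singleton_iff] at hs ht
        refine hsep s t ?_ p hys ?_
        · rw [hs, ht]; exact fun e => hc1 e.symm
        · rw [ht]
          exact lt_of_lt_of_le hzt (le_max_left _ _)
      have hdisjA₂U : ∀ c ∈ image r univ, c ≠ r₂ → Disjoint A₂ (U c) := by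
        intro c hc hc2
        rw [Set.disjoint_left]
        intro p hpA hpU
        obtain ⟨y, ⟨s, hs, rfl⟩, hys⟩ :=
          (infDist_lt_iff hK₂ne).mp hpA.2.2
        obtain ⟨z, ⟨t, ht, rfl⟩, hzt⟩ :=
          (infDist_lt_iff (hKne c hc)).mp ((inv.U_sub c hc) hpU).2
        simp only [Set.mem_preimage, Set.mem_singleton_iff] at hs ht
        refine hsep s t ?_ p hys ?_
        · rw [hs, ht]; exact fun e => hc2 e.symm
        · rw [ht]
          exact lt_of_lt_of_le hzt (le_max_left _ _)
      have hdisjA₁A₂ : Disjoint A₁ A₂ := by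
        rw [Set.disjoint_left]
        intro p hpA hpB
        obtain ⟨y, ⟨s, hs, rfl⟩, hys⟩ := (infDist_lt_iff hK₁ne).mp hpA.2.2
        obtain ⟨z, ⟨t, ht, rfl⟩, hzt⟩ := (infDist_lt_iff hK₂ne).mp hpB.2.2
        simp only [Set.mem_preimage, Set.mem_singleton_iff] at hs ht
        refine hsep s t ?_ p hys (lt_of_lt_of_le hzt (le_max_right _ _))
        rw [hs, ht]; exact hr12
      have hdisjU₁A₁ : Disjoint (U r₁) A₁ := by
        rw [Set.disjoint_left]
        intro p hpU hpA
        exact absurd (((inv.U_sub r₁ hmem₁B) hpU).2) (not_lt.mpr hpA.2.1.le)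
      have hdisjU₂A₂ : Disjoint (U r₂) A₂ := by
        rw [Set.disjoint_left]
        intro p hpU hpA
        exact absurd (((inv.U_sub r₂ hmem₂B) hpU).2) (not_lt.mpr hpA.2.1.le)
      have hdisjU₁A₂ : Disjoint (U r₁) A₂ := (hdisjA₂U r₁ hmem₁B hr12).symm
      have hdisjU₂A₁ : Disjoint (U r₂) A₁ := (hdisjA₁U r₂ hmem₂B (Ne.symm hr12)).symm
      have hdisjU₁U₂ : Disjoint (U r₁) (U r₂) := inv.U_disj r₁ hmem₁B r₂ hmem₂B hr12
      -- annuli measures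
      have hμA₁ : ENNReal.ofReal (ℓ / 2 - ρ r₁) ≤ μH[1] A₁ := by
        refine measure_annulus hSconn f₁ (lipschitz_infDist_pt K₁) (ha u) (ha v) ?_ ?_
        · have : f₁ (a u) = 0 := infDist_zero_of_mem ⟨u, by simp [hr₁], rfl⟩
          rw [this]; exact inv.rho_nonneg r₁
        · refine le_of_not_gt fun h => ?_
          obtain ⟨y, ⟨s, hs, rfl⟩, hys⟩ := (infDist_lt_iff hK₁ne).mp h
          simp only [Set.mem_preimage, Set.mem_singleton_iff] at hs
          have : ℓ ≤ dist (a v) (a s) := hℓmin v s (by rw [hs]; exact Ne.symm hr12)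
          linarith
      have hμA₂ : ENNReal.ofReal (ℓ / 2 - ρ r₂) ≤ μH[1] A₂ := by
        refine measure_annulus hSconn f₂ (lipschitz_infDist_pt K₂) (ha v) (ha u) ?_ ?_
        · have : f₂ (a v) = 0 := infDist_zero_of_mem ⟨v, by simp [hr₂], rfl⟩
          rw [this]; exact inv.rho_nonneg r₂
        · refine le_of_not_gt fun h => ?_
          obtain ⟨y, ⟨s, hs, rfl⟩, hys⟩ := (infDist_lt_iff hK₂ne).mp h
          simp only [Set.mem_preimage, Set.mem_singleton_iff] at hs
          have : ℓ ≤ dist (a u) (a s) := hℓmin u s (by rw [hs]; exact huv)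
          linarith
      -- apply induction hypothesis
      refine ih r' ρ' U' G'' ⟨?_, ?_, ?_, ?_, ?_, ?_, ?_, ?_⟩ hcard'
      · exact isAcyclic_sup_edge inv.acyclic hnreach
      · -- reachability
        intro i j
        constructor
        · intro h
          rcases reachable_sup_edge_cases h with h | ⟨h1, h2⟩ | ⟨h1, h2⟩
          · exact hcong i j ((inv.reach i j).mp h)
          · have e1 : r i = r₁ := (inv.reach i u).mp h1
            have e2 : r j = r₂ := ((inv.reach v j).mp h2).symm
            rw [(hr'1iff i).mpr (Or.inl e1), (hr'1iff j).mpr (Or.inr e2)]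
          · have e1 : r i = r₂ := (inv.reach i v).mp h1
            have e2 : r j = r₁ := ((inv.reach u j).mp h2).symm
            rw [(hr'1iff i).mpr (Or.inr e1), (hr'1iff j).mpr (Or.inl e2)]
        · intro h
          by_cases h1 : r i = r₂ <;> by_cases h2 : r j = r₂
          · exact ((inv.reach i j).mpr (h1.trans h2.symm)).mono le_sup_left
          · have hj1 : r j = r₁ := by
              have := (hr'1iff j).mp (by rw [← h, hr'2 i h1])
              tauto
            refine (((inv.reach i v).mpr h1).mono le_sup_left).trans ?_
            refine (hG''adj.symm.reachable).trans ?_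
            exact ((inv.reach u j).mpr hj1.symm).mono le_sup_left
          · have hi1 : r i = r₁ := by
              have := (hr'1iff i).mp (by rw [h, hr'2 j h2])
              tauto
            refine (((inv.reach i u).mpr hi1).mono le_sup_left).trans ?_
            refine (hG''adj.reachable).trans ?_
            exact ((inv.reach v j).mpr h2.symm).mono le_sup_left
          · rw [hr'ne i h1, hr'ne j h2] at h
            exact ((inv.reach i j).mpr h).mono le_sup_left
      · -- rho nonneg
        intro c
        simp only [hρ'def]
        split
        · linarith
        · exact inv.rho_nonneg c
      · -- rho sep
        intro i j h
        have hrij : r i ≠ r j := fun e => h (hcong i j e)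
        by_cases hi : r' i = r₁
        · rw [hi]
          simp only [hρ'def, if_pos rfl]
          have := hℓmin i j hrij
          linarith
        · have hine : r i ≠ r₂ := fun e => hi (hr'2 i e)
          rw [hr'ne i hine] at hi ⊢
          simp only [hρ'def, if_neg hi]
          exact inv.rho_sep i j hrij
      · -- U sub
        intro c hc
        rw [himage'] at hc
        obtain ⟨hc2, hcB⟩ := mem_erase.mp hc
        by_cases h1 : c = r₁
        · rw [h1]
          have hsub₁ : K₁ ⊆ a '' (r' ⁻¹' {r₁}) := by
            rw [hpre1, Set.image_union]
            exact Set.subset_union_left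
          have hsub₂ : K₂ ⊆ a '' (r' ⁻¹' {r₁}) := by
            rw [hpre1, Set.image_union]
            exact Set.subset_union_right
          have hinf1 : ∀ p : X, infDist p K₁ < ℓ / 2 →
              infDist p (a '' (r' ⁻¹' {r₁})) < ℓ / 2 := fun p h =>
            lt_of_le_of_lt (infDist_le_infDist_of_subset hsub₁ hK₁ne) h
          have hinf2 : ∀ p : X, infDist p K₂ < ℓ / 2 →
              infDist p (a '' (r' ⁻¹' {r₁})) < ℓ / 2 := fun p h =>
            lt_of_le_of_lt (infDist_le_infDist_of_subset hsub₂ hK₂ne) h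
          have hρ'c : ρ' r₁ = ℓ / 2 := by simp [hρ'def]
          rw [hρ'c]
          simp only [hU'def, if_pos rfl]
          intro p hp
          rcases hp with ((hp | hp) | hp) | hp
          · have := (inv.U_sub r₁ hmem₁B) hp
            exact ⟨this.1, hinf1 p (lt_of_lt_of_le this.2 hρ1)⟩
          · have := (inv.U_sub r₂ hmem₂B) hp
            exact ⟨this.1, hinf2 p (lt_of_lt_of_le this.2 hρ2)⟩
          · exact ⟨hp.1, hinf1 p hp.2.2⟩
          · exact ⟨hp.1, hinf2 p hp.2.2⟩
        · have hU'c : U' c = U c := by simp [hU'def, h1]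
          have hρ'c : ρ' c = ρ c := by simp [hρ'def, h1]
          rw [hU'c, hρ'c, hpre c h1 hc2]
          exact inv.U_sub c hcB
      · -- U meas
        intro c
        simp only [hU'def]
        split
        · exact (((inv.U_meas r₁).union (inv.U_meas r₂)).union hA₁meas).union hA₂meas
        · exact inv.U_meas c
      · -- U disj
        intro c hc c' hc' hne
        rw [himage'] at hc hc'
        obtain ⟨hcr2, hcB⟩ := mem_erase.mp hc
        obtain ⟨hc'r2, hc'B⟩ := mem_erase.mp hc'
        by_cases h1 : c = r₁
        · rw [h1]
          have hc'1 : c' ≠ r₁ := by rw [← h1]; exact Ne.symm hne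
          have hU'c : U' r₁ = U r₁ ∪ U r₂ ∪ A₁ ∪ A₂ := by simp [hU'def]
          have hU'c' : U' c' = U c' := by simp [hU'def, hc'1]
          rw [hU'c, hU'c']
          refine Set.disjoint_union_left.mpr
            ⟨Set.disjoint_union_left.mpr ⟨Set.disjoint_union_left.mpr ⟨?_, ?_⟩, ?_⟩, ?_⟩
          · exact inv.U_disj r₁ hmem₁B c' hc'B (Ne.symm hc'1)
          · exact inv.U_disj r₂ hmem₂B c' hc'B (Ne.symm hc'r2)
          · exact hdisjA₁U c' hc'B hc'1
          · exact hdisjA₂U c' hc'B hc'r2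
        · by_cases h2 : c' = r₁
          · rw [h2]
            have hU'c : U' c = U c := by simp [hU'def, h1]
            have hbig : U' r₁ = U r₁ ∪ U r₂ ∪ A₁ ∪ A₂ := by simp [hU'def]
            rw [hU'c, hbig]
            refine Set.disjoint_union_right.mpr
              ⟨Set.disjoint_union_right.mpr ⟨Set.disjoint_union_right.mpr ⟨?_, ?_⟩, ?_⟩, ?_⟩
            · exact inv.U_disj c hcB r₁ hmem₁B h1
            · exact inv.U_disj c hcB r₂ hmem₂B hcr2
            · exact (hdisjA₁U c hcB h1).symm
            · exact (hdisjA₂U c hcB hcr2).symm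
          · have e1 : U' c = U c := by simp [hU'def, h1]
            have e2 : U' c' = U c' := by simp [hU'def, h2]
            rw [e1, e2]
            exact inv.U_disj c hcB c' hc'B hne
      · -- charge
        have e1 : wsum a G'' = wsum a G' + 2 * ℓ := wsum_sup_edge a G' hneuv hnadj
        have hρ'r₁ : ρ' r₁ = ℓ / 2 := by simp [hρ'def]
        have hU'r₁ : U' r₁ = U r₁ ∪ U r₂ ∪ A₁ ∪ A₂ := by simp [hU'def]
        set B := image r univ with hB
        set C := (B.erase r₂).erase r₁ with hC
        have hsumρ' : ∑ c ∈ image r' univ, ρ' c = ℓ / 2 + ∑ c ∈ C, ρ c := by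
          rw [himage', ← Finset.add_sum_erase _ ρ' hmem₁B', hρ'r₁]
          congr 1
          refine Finset.sum_congr rfl fun c hc => ?_
          have : c ≠ r₁ := (mem_erase.mp hc).1
          simp [hρ'def, this]
        have hsumρ : ∑ c ∈ B, ρ c = ρ r₂ + (ρ r₁ + ∑ c ∈ C, ρ c) := by
          rw [← Finset.add_sum_erase _ ρ hmem₂B, ← Finset.add_sum_erase _ ρ hmem₁B']
        have hsumU' : ∑ c ∈ image r' univ, μH[1] (U' c)
            = μH[1] (U' r₁) + ∑ c ∈ C, μH[1] (U c) := by
          rw [himage', ← Finset.add_sum_erase _ (fun c => μH[1] (U' c)) hmem₁B']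
          congr 1
          refine Finset.sum_congr rfl fun c hc => ?_
          have : c ≠ r₁ := (mem_erase.mp hc).1
          simp [hU'def, this]
        have hsumUB : ∑ c ∈ B, μH[1] (U c)
            = μH[1] (U r₂) + (μH[1] (U r₁) + ∑ c ∈ C, μH[1] (U c)) := by
          rw [← Finset.add_sum_erase _ (fun c => μH[1] (U c)) hmem₂B,
            ← Finset.add_sum_erase _ (fun c => μH[1] (U c)) hmem₁B']
        have hμU' : μH[1] (U' r₁)
            = μH[1] (U r₁) + μH[1] (U r₂) + μH[1] A₁ + μH[1] A₂ := by
          rw [hU'r₁,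
            measure_union (Set.disjoint_union_left.mpr
              ⟨Set.disjoint_union_left.mpr ⟨hdisjU₁A₂, hdisjU₂A₂⟩, hdisjA₁A₂⟩) hA₂meas,
            measure_union (Set.disjoint_union_left.mpr ⟨hdisjU₁A₁, hdisjU₂A₁⟩) hA₁meas,
            measure_union hdisjU₁U₂ (inv.U_meas r₂)]
        rw [hsumρ', hsumU', hμU', e1]
        have hreal : (wsum a G' + 2 * ℓ) / 4 + (ℓ / 2 + ∑ c ∈ C, ρ c)
            = (wsum a G' / 4 + ∑ c ∈ B, ρ c) + ((ℓ / 2 - ρ r₁) + (ℓ / 2 - ρ r₂)) := by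
          rw [hsumρ]; ring
        calc ENNReal.ofReal ((wsum a G' + 2 * ℓ) / 4 + (ℓ / 2 + ∑ c ∈ C, ρ c))
            = ENNReal.ofReal ((wsum a G' / 4 + ∑ c ∈ B, ρ c)
                + ((ℓ / 2 - ρ r₁) + (ℓ / 2 - ρ r₂))) := by rw [hreal]
          _ ≤ ENNReal.ofReal (wsum a G' / 4 + ∑ c ∈ B, ρ c)
                + ENNReal.ofReal ((ℓ / 2 - ρ r₁) + (ℓ / 2 - ρ r₂)) := ENNReal.ofReal_add_le
          _ ≤ ENNReal.ofReal (wsum a G' / 4 + ∑ c ∈ B, ρ c)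
                + (ENNReal.ofReal (ℓ / 2 - ρ r₁) + ENNReal.ofReal (ℓ / 2 - ρ r₂)) :=
              add_le_add_right ENNReal.ofReal_add_le _
          _ ≤ (∑ c ∈ B, μH[1] (U c)) + (μH[1] A₁ + μH[1] A₂) :=
              add_le_add inv.charge (add_le_add hμA₁ hμA₂)
          _ = μH[1] (U r₁) + μH[1] (U r₂) + μH[1] A₁ + μH[1] A₂
                + ∑ c ∈ C, μH[1] (U c) := by rw [hsumUB]; ring

end Main


/-- Steiner ratio at most 2: in any metric space, the total weight of a minimum
spanning tree on points `a₁, …, a_n` is at most twice the length of any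
connected compact set containing all the points. -/
theorem mst_le_two_steiner (X : Type*) [MetricSpace X] [MeasurableSpace X] [BorelSpace X]
    (n : ℕ) (hn : 0 < n) (a : Fin n → X)
    (G : SimpleGraph (Fin n)) [DecidableRel G.Adj] (hG : G.IsTree)
    (hmst : ∀ (G' : SimpleGraph (Fin n)) [DecidableRel G'.Adj], G'.IsTree →
      ((1 / 2 : ℝ) * ∑ k, ∑ j, if G.Adj k j then dist (a k) (a j) else 0)
        ≤ (1 / 2 : ℝ) * ∑ k, ∑ j, if G'.Adj k j then dist (a k) (a j) else 0)
    (St : Set X) (hSt : IsCompact St) (hconn : IsConnected St)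
    (ha : ∀ i, a i ∈ St) :
    ENNReal.ofReal ((1 / 2 : ℝ) * ∑ k, ∑ j, if G.Adj k j then dist (a k) (a j) else 0)
      ≤ 2 * μH[1] St := by
  classical
  obtain ⟨T, hT, hTw⟩ := main_ind a St hn hconn.isPreconnected ha
    hSt.isClosed.measurableSet n id (fun _ => 0) (fun _ => ∅) ⊥
    ⟨by simp, fun i j => by simp [SimpleGraph.reachable_bot],
      fun c => le_refl 0, fun i j _ => by simpa using dist_nonneg,
      fun c _ => by simp, fun c => MeasurableSet.empty,
      fun c _ c' _ _ => by simp,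
      by simp [wsum_bot]⟩
    (by simp)
  have h1 := hmst T hT
  rw [← wsum_eq a T] at h1
  have h2 : (1 / 2 : ℝ) * wsum a T = wsum a T / 2 := by ring
  rw [h2] at h1
  exact le_trans (ENNReal.ofReal_le_ofReal h1) hTw
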